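/- Define a_n = Σ_{k=0}^n C(n,k)^2 · C(2k,k). For any prime p and any n with base-p digits n_0,...,n_r, one has a_n ≡ ∏_{i=0}^r a_{n_i} (mod p). -/

import Mathlib

open Finset

private lemma lucas_cast (p : ℕ) [Fact p.Prime] (n k : ℕ) :
    ((n.choose k : ℕ) : ZMod p) =
      ((n % p).choose (k % p) : ℕ) * ((n / p).choose (k / p) : ℕ) := by
  have := Choose.choose_modEq_choose_mod_mul_choose_div_nat (n := n) (k := k) (p := p)
  rw [← ZMod.natCast_eq_natCast_iff] at this
  exact_mod_cast this

private lemma sum_range_mul' {M : Type*} [AddCommMonoid M] (p m : ℕ) (f : ℕ → M) :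
    ∑ k ∈ range (p * m), f k = ∑ i ∈ range m, ∑ j ∈ range p, f (p * i + j) := by
  induction m with
  | zero => simp
  | succ m ih =>
    rw [Nat.mul_succ, Finset.sum_range_add, ih, Finset.sum_range_succ]

private lemma key_step (p : ℕ) [Fact p.Prime] (n0 m : ℕ) (hn0 : n0 < p) :
    ((∑ k ∈ range (n0 + p * m + 1),
        ((n0 + p * m).choose k) ^ 2 * Nat.choose (2 * k) k : ℕ) : ZMod p) =
      ((∑ k ∈ range (n0 + 1), (n0.choose k) ^ 2 * Nat.choose (2 * k) k : ℕ) : ZMod p) *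
      ((∑ k ∈ range (m + 1), (m.choose k) ^ 2 * Nat.choose (2 * k) k : ℕ) : ZMod p) := by
  have hp : 0 < p := Fact.out (p := p.Prime) |>.pos
  set N := n0 + p * m with hN
  push_cast
  -- extend the first sum to range (p * (m + 1))
  have hext : (∑ k ∈ range (N + 1),
        ((N.choose k : ZMod p)) ^ 2 * ((Nat.choose (2 * k) k : ℕ) : ZMod p)) =
      ∑ k ∈ range (p * (m + 1)),
        ((N.choose k : ZMod p)) ^ 2 * ((Nat.choose (2 * k) k : ℕ) : ZMod p) := by
    apply Finset.sum_subset
    · intro x hx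
      simp only [mem_range] at *
      have : N + 1 ≤ p * (m + 1) := by
        have : n0 + 1 ≤ p := hn0
        calc N + 1 = n0 + 1 + p * m := by ring
        _ ≤ p + p * m := by omega
        _ = p * (m + 1) := by ring
      omega
    · intro x _ hx
      simp only [mem_range, not_lt] at hx
      have : N.choose x = 0 := Nat.choose_eq_zero_of_lt (by omega)
      simp [this]
  rw [hext, sum_range_mul' p (m + 1)]
  -- extend the n0 sum to range p
  have hext2 : (∑ k ∈ range (n0 + 1),
        ((n0.choose k : ZMod p)) ^ 2 * ((Nat.choose (2 * k) k : ℕ) : ZMod p)) =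
      ∑ k ∈ range p,
        ((n0.choose k : ZMod p)) ^ 2 * ((Nat.choose (2 * k) k : ℕ) : ZMod p) := by
    apply Finset.sum_subset
    · intro x hx; simp only [mem_range] at *; omega
    · intro x _ hx
      simp only [mem_range, not_lt] at hx
      have : n0.choose x = 0 := Nat.choose_eq_zero_of_lt (by omega)
      simp [this]
  rw [hext2, Finset.sum_mul_sum]
  conv_rhs => rw [Finset.sum_comm]
  apply Finset.sum_congr rfl
  intro i hi
  apply Finset.sum_congr rfl
  intro j hj
  simp only [mem_range] at hi hj
  -- now the per-term identity, k = p * i + j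
  have hkmod : (p * i + j) % p = j := by rw [Nat.mul_add_mod, Nat.mod_eq_of_lt hj]
  have hkdiv : (p * i + j) / p = i := by
    rw [Nat.mul_add_div hp, Nat.div_eq_of_lt hj, Nat.add_zero]
  have hNmod : N % p = n0 := by
    rw [hN, Nat.add_mul_mod_self_left, Nat.mod_eq_of_lt hn0]
  have hNdiv : N / p = m := by
    rw [hN, Nat.add_mul_div_left _ _ hp, Nat.div_eq_of_lt hn0, Nat.zero_add]
  have hc1 : ((N.choose (p * i + j) : ℕ) : ZMod p) =
      ((n0.choose j : ℕ) : ZMod p) * ((m.choose i : ℕ) : ZMod p) := by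
    rw [lucas_cast, hkmod, hkdiv, hNmod, hNdiv]
  rw [hc1]
  by_cases h2j : 2 * j < p
  · have h2kmod : (2 * (p * i + j)) % p = 2 * j := by
      rw [show 2 * (p * i + j) = p * (2 * i) + 2 * j by ring, Nat.mul_add_mod,
        Nat.mod_eq_of_lt h2j]
    have h2kdiv : (2 * (p * i + j)) / p = 2 * i := by
      rw [show 2 * (p * i + j) = p * (2 * i) + 2 * j by ring, Nat.mul_add_div hp,
        Nat.div_eq_of_lt h2j, Nat.add_zero]
    have hc2 : (((2 * (p * i + j)).choose (p * i + j) : ℕ) : ZMod p) =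
        (((2 * j).choose j : ℕ) : ZMod p) * (((2 * i).choose i : ℕ) : ZMod p) := by
      rw [lucas_cast, h2kmod, h2kdiv, hkmod, hkdiv]
    rw [hc2]; ring
  · push_neg at h2j
    have hzero1 : (2 * j - p).choose j = 0 := Nat.choose_eq_zero_of_lt (by omega)
    have h2kmod : (2 * (p * i + j)) % p = 2 * j - p := by
      rw [show 2 * (p * i + j) = p * (2 * i + 1) + (2 * j - p) by
          have h : p * (2 * i + 1) = p * i + p * i + p := by ring
          omega, Nat.mul_add_mod, Nat.mod_eq_of_lt (by omega)]
    have hc2 : (((2 * (p * i + j)).choose (p * i + j) : ℕ) : ZMod p) = 0 := by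
      rw [lucas_cast, h2kmod, hkmod, hzero1]
      simp
    have h2jmod : (2 * j) % p = 2 * j - p := by
      rw [Nat.mod_eq_sub_mod h2j, Nat.mod_eq_of_lt (by omega)]
    have h2jdiv : (2 * j) / p = 1 := Nat.div_eq_of_lt_le (by omega) (by omega)
    have hc3 : (((2 * j).choose j : ℕ) : ZMod p) = 0 := by
      rw [lucas_cast, h2jmod, h2jdiv, Nat.mod_eq_of_lt hj, Nat.div_eq_of_lt hj, hzero1]
      simp
    rw [hc2, hc3]
    ring

theorem a_seq_mod_p_eq_prod_digits (p : ℕ) (hp : p.Prime) (n : ℕ)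
    (a : ℕ → ℕ)
    (ha : ∀ m, a m = ∑ k ∈ Finset.range (m + 1),
      (Nat.choose m k) ^ 2 * Nat.choose (2 * k) k) :
    a n ≡ ((Nat.digits p n).map a).prod [MOD p] := by
  haveI : Fact p.Prime := ⟨hp⟩
  have hp1 : 1 < p := hp.one_lt
  rw [← ZMod.natCast_eq_natCast_iff]
  induction n using Nat.strong_induction_on with
  | _ n ih =>
    rcases Nat.eq_zero_or_pos n with h0 | h0
    · subst h0
      simp [ha 0]
    · rw [Nat.digits_def' hp1 h0, List.map_cons, List.prod_cons, Nat.cast_mul,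
        ← ih (n / p) (Nat.div_lt_self h0 hp1)]
      have hkey := key_step p (n % p) (n / p) (Nat.mod_lt n (by omega))
      rw [← ha, ← ha, ← ha] at hkey
      rw [show n % p + p * (n / p) = n from Nat.mod_add_div n p] at hkey
      exact hkey
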